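/- arXiv:2007.14045 — 3 statements merged into one kernel-verified Lean document; each statement's English description precedes it below -/
import Mathlib

section
/- With the uniform distribution, for any Boolean classifier M over a finite feature set X with |X| = n and any entity e, Σ_{x∈X} SHAP(M,e,x) = M(e) − #sat(M)/2^n, where #sat(M) is the number of entities accepted by M. -/
open Finset

variable {X : Type*} [Fintype X] [DecidableEq X]

/-- The entities consistent with `e` on `S`. -/
def cw (e : X → Bool) (S : Finset X) : Finset (X → Bool) :=
  Finset.univ.filter (fun e' => ∀ x ∈ S, e' x = e x)

/-- `φ(M,e,S)` under the uniform distribution. -/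
noncomputable def phi (M : (X → Bool) → Bool) (e : X → Bool) (S : Finset X) : ℝ :=
  (1 / 2 ^ (Sᶜ.card)) * ∑ e' ∈ cw e S, (if M e' then (1 : ℝ) else 0)

/-- The SHAP score of feature `x` on entity `e` w.r.t. classifier `M`. -/
noncomputable def shap (M : (X → Bool) → Bool) (e : X → Bool) (x : X) : ℝ :=
  ∑ S ∈ (Finset.univ.erase x).powerset,
    ((Nat.factorial S.card : ℝ) * (Nat.factorial (Fintype.card X - S.card - 1)) /
        (Nat.factorial (Fintype.card X))) *
      (phi M e (insert x S) - phi M e S)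
/-- Number of entities accepted by `M`. -/
def ssat (M : (X → Bool) → Bool) : ℕ :=
  (Finset.univ.filter (fun e' : X → Bool => M e' = true)).card

noncomputable def coefR (n k : ℕ) : ℝ :=
  (Nat.factorial k : ℝ) * (Nat.factorial (n - k - 1)) / (Nat.factorial n)

lemma phi_univ (M : (X → Bool) → Bool) (e : X → Bool) :
    phi M e univ = if M e then (1:ℝ) else 0 := by
  have h1 : cw e (univ : Finset X) = {e} := by
    ext e'
    simp only [cw, mem_filter, mem_univ, true_and, mem_singleton]
    constructor
    · intro h; funext x; exact h x (by simp)
    · intro h x _; rw [h]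
  simp only [phi, h1, Finset.sum_singleton, compl_univ, card_empty, pow_zero]
  ring

lemma phi_empty (M : (X → Bool) → Bool) (e : X → Bool) :
    phi M e ∅ = (ssat M : ℝ) / 2 ^ (Fintype.card X) := by
  have h1 : cw e (∅ : Finset X) = univ := by ext e'; simp [cw]
  have h2 : ∑ e' ∈ (univ : Finset (X → Bool)), (if M e' then (1:ℝ) else 0) = (ssat M : ℝ) := by
    simp [ssat, Finset.sum_boole]
  simp [phi, h1, h2, Finset.card_univ, div_eq_mul_inv, mul_comm]

lemma reindex (x : X) (f : Finset X → ℝ) :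
    ∑ S ∈ (univ.erase x).powerset, coefR (Fintype.card X) S.card * f (insert x S)
      = ∑ T ∈ (univ : Finset X).powerset,
          (if x ∈ T then coefR (Fintype.card X) (T.card - 1) * f T else 0) := by
  rw [← Finset.sum_filter]
  refine Finset.sum_bij' (fun S _ => insert x S) (fun T _ => T.erase x)
    ?hi ?hj ?li ?ri ?h
  case hi =>
    intro S hS
    simp [mem_filter, mem_powerset]
  case hj =>
    intro T hT
    simp only [mem_filter, mem_powerset] at hT
    simp [mem_powerset, Finset.erase_subset_erase _ hT.1]
  case li =>
    intro S hS
    simp only [mem_powerset, Finset.subset_erase] at hS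
    exact Finset.erase_insert hS.2
  case ri =>
    intro T hT
    simp only [mem_filter] at hT
    exact Finset.insert_erase hT.2
  case h =>
    intro S hS
    simp only [mem_powerset, Finset.subset_erase] at hS
    rw [Finset.card_insert_of_notMem hS.2]
    simp

lemma nat_id {k n : ℕ} (hk : 0 < k) (hkn : k < n) :
    k * (Nat.factorial (k-1) * Nat.factorial (n-(k-1)-1))
      = (n-k) * (Nat.factorial k * Nat.factorial (n-k-1)) := by
  have h1 : n - (k-1) - 1 = n - k := by omega
  have h2 : n - k - 1 = (n-k) - 1 := by omega
  rw [h1, h2, ← mul_assoc, Nat.mul_factorial_pred hk.ne', mul_left_comm,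
    Nat.mul_factorial_pred (by omega : n - k ≠ 0), mul_comm]

lemma bracket (T : Finset X) :
    (T.card : ℝ) * coefR (Fintype.card X) (T.card - 1)
      - (Tᶜ.card : ℝ) * coefR (Fintype.card X) T.card
    = (if T = univ then (1:ℝ) else 0) - (if T = (∅ : Finset X) then (1:ℝ) else 0) := by
  set n := Fintype.card X with hn
  have hk : T.card ≤ n := by rw [hn]; exact Finset.card_le_univ T
  have hc : (Tᶜ.card) = n - T.card := by rw [Finset.card_compl, hn]
  have hT0 : (T = ∅) ↔ T.card = 0 := Finset.card_eq_zero.symm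
  have hTu : (T = univ) ↔ T.card = n := by
    constructor
    · rintro rfl; rw [hn, Finset.card_univ]
    · intro h; rw [hn] at h; exact Finset.card_eq_iff_eq_univ T |>.mp h
  have hfacn : (0:ℝ) < (Nat.factorial n : ℝ) := by exact_mod_cast Nat.factorial_pos n
  rw [hc]
  set k := T.card with hkdef
  rcases Nat.eq_zero_or_pos k with h0 | h0
  · rcases Nat.eq_zero_or_pos n with hn0 | hn0
    · rw [if_pos (hTu.mpr (by omega)), if_pos (hT0.mpr h0)]
      simp [h0, hn0]
    · have hne : T ≠ univ := fun h => by have := hTu.mp h; omega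
      rw [if_neg hne, if_pos (hT0.mpr h0)]
      have hkey : (n:ℝ) * Nat.factorial (n-1) = Nat.factorial n := by
        exact_mod_cast Nat.mul_factorial_pred (by omega)
      simp only [h0, coefR, Nat.factorial_zero, Nat.cast_one, Nat.cast_zero, zero_mul,
        Nat.sub_zero, one_mul]
      field_simp
      linarith [hkey]
  · rcases eq_or_lt_of_le hk with heq | hlt
    · have hne : T ≠ ∅ := fun h => by have := hT0.mp h; omega
      rw [if_pos (hTu.mpr heq), if_neg hne]
      have hkey : (n:ℝ) * Nat.factorial (n-1) = Nat.factorial n := by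
        exact_mod_cast Nat.mul_factorial_pred (by omega)
      have h1 : n - (k-1) - 1 = 0 := by omega
      have h2 : k - 1 = n - 1 := by omega
      rw [heq] at *
      simp only [coefR, h2, h1, Nat.factorial_zero, Nat.cast_one, mul_one, Nat.sub_self,
        Nat.cast_zero, zero_mul, sub_zero]
      field_simp
      linarith [hkey]
    · have hne1 : T ≠ univ := fun h => by have := hTu.mp h; omega
      have hne2 : T ≠ ∅ := fun h => by have := hT0.mp h; omega
      rw [if_neg hne1, if_neg hne2]
      have := congrArg (Nat.cast : ℕ → ℝ) (nat_id h0 hlt)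
      push_cast [Nat.cast_sub hlt.le] at this
      simp only [coefR]
      field_simp
      push_cast [Nat.cast_sub hlt.le]
      linarith [this]

lemma powerset_erase (x : X) :
    (univ.erase x).powerset = univ.powerset.filter (fun S => x ∉ S) := by
  ext S
  simp [Finset.subset_erase]

theorem shap_sum_eq (M : (X → Bool) → Bool) (e : X → Bool) :
    ∑ x : X, shap M e x =
      (if M e then (1 : ℝ) else 0) - (ssat M : ℝ) / 2 ^ (Fintype.card X) := by
  set n := Fintype.card X with hn
  set v : Finset X → ℝ := phi M e with hv
  have hshap : ∀ x : X, shap M e x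
      = (∑ S ∈ (univ.erase x).powerset, coefR n S.card * v (insert x S))
        - ∑ S ∈ (univ.erase x).powerset, coefR n S.card * v S := by
    intro x
    rw [← Finset.sum_sub_distrib]
    apply Finset.sum_congr rfl
    intro S _
    rw [← mul_sub]
    rfl
  calc ∑ x : X, shap M e x
      = (∑ x : X, ∑ S ∈ (univ.erase x).powerset, coefR n S.card * v (insert x S))
        - ∑ x : X, ∑ S ∈ (univ.erase x).powerset, coefR n S.card * v S := by
        rw [← Finset.sum_sub_distrib]; exact Finset.sum_congr rfl fun x _ => hshap x
    _ = (∑ T ∈ (univ : Finset X).powerset, (T.card : ℝ) * (coefR n (T.card - 1) * v T))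
        - ∑ T ∈ (univ : Finset X).powerset, (Tᶜ.card : ℝ) * (coefR n T.card * v T) := by
        congr 1
        · rw [Finset.sum_congr rfl (fun x _ => reindex x v), Finset.sum_comm]
          apply Finset.sum_congr rfl
          intro T _
          rw [Finset.sum_ite_mem, Finset.univ_inter, Finset.sum_const, nsmul_eq_mul]
        · simp_rw [powerset_erase, Finset.sum_filter]
          rw [Finset.sum_comm]
          apply Finset.sum_congr rfl
          intro S _
          have : (univ.filter (fun x => x ∉ S)) = Sᶜ := by ext y; simp
          rw [← Finset.sum_filter, this, Finset.sum_const, nsmul_eq_mul]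
    _ = ∑ T ∈ (univ : Finset X).powerset,
          ((if T = univ then (1:ℝ) else 0) - (if T = (∅ : Finset X) then (1:ℝ) else 0)) * v T := by
        rw [← Finset.sum_sub_distrib]
        apply Finset.sum_congr rfl
        intro T _
        rw [← bracket T]
        ring
    _ = v univ - v ∅ := by
        simp_rw [sub_mul, ite_mul, one_mul, zero_mul]
        rw [Finset.sum_sub_distrib, Finset.sum_ite_eq' _ (univ : Finset X),
          Finset.sum_ite_eq' _ (∅ : Finset X)]
        simp
    _ = (if M e then (1 : ℝ) else 0) - (ssat M : ℝ) / 2 ^ (Fintype.card X) := by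
        rw [hv, phi_univ, phi_empty]
end

section
/- For a Boolean classifier M over a finite feature set X with |X| = n, an entity e, and a natural number k ≤ n, define H(M,e,k) = Σ_{S ⊆ X, |S| = k} Σ_{e' ∈ cw(e,S)} M(e'). Then H(M,e,k) = Σ_{ℓ=k}^{n} C(ℓ,k) · #sat(M,e,ℓ), where #sat(M,e,ℓ) is the number of entities e'' accepted by M that agree with e on exactly ℓ features. -/
open Finset

variable {X : Type*} [Fintype X] [DecidableEq X]

/-- The set of features on which `e` and `e'` coincide. -/
def sim (e e' : X → Bool) : Finset X :=
  Finset.univ.filter (fun x => e x = e' x)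

/-- Number of entities accepted by `M` agreeing with `e` on exactly `k` features. -/
def ssatk (M : (X → Bool) → Bool) (e : X → Bool) (k : ℕ) : ℕ :=
  (Finset.univ.filter (fun e' : X → Bool => M e' = true ∧ (sim e e').card = k)).card
/-- `H(M,e,k) = Σ_{S ⊆ X, |S| = k} Σ_{e' ∈ cw(e,S)} M(e')`. -/
def Hcount (M : (X → Bool) → Bool) (e : X → Bool) (k : ℕ) : ℕ :=
  ∑ S ∈ Finset.univ.powersetCard k,
    ∑ e' ∈ cw e S, (if M e' then 1 else 0)

theorem H_eq_sum_choose_ssatk (M : (X → Bool) → Bool) (e : X → Bool) (k : ℕ)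
    (hk : k ≤ Fintype.card X) :
    Hcount M e k =
      ∑ ℓ ∈ Finset.Icc k (Fintype.card X), Nat.choose ℓ k * ssatk M e ℓ := by
  classical
  -- Step 1: swap the sums
  have h1 : Hcount M e k =
      ∑ e' : X → Bool, ∑ _S ∈ (sim e e').powersetCard k,
        (if M e' then 1 else 0) := by
    unfold Hcount
    refine Finset.sum_comm' (fun S e' => ?_)
    simp only [cw, sim, Finset.mem_filter, Finset.mem_univ, true_and,
      Finset.mem_powersetCard, Finset.subset_univ, Finset.subset_iff, eq_comm]
    tauto
  -- Step 2: evaluate inner sum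
  have h2 : Hcount M e k =
      ∑ e' ∈ Finset.univ.filter (fun e' : X → Bool => M e' = true),
        ((sim e e').card.choose k) := by
    rw [h1]
    rw [Finset.sum_filter]
    refine Finset.sum_congr rfl fun e' _ => ?_
    by_cases hM : M e' = true <;>
      simp [hM, Finset.sum_const, Finset.card_powersetCard]
  -- Step 3: fiberwise over ℓ = card of sim
  have h3 : Hcount M e k =
      ∑ ℓ ∈ Finset.range (Fintype.card X + 1), Nat.choose ℓ k * ssatk M e ℓ := by
    rw [h2]
    rw [← Finset.sum_fiberwise_of_maps_to
      (g := fun e' : X → Bool => (sim e e').card)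
      (t := Finset.range (Fintype.card X + 1))
      (fun e' _ => Finset.mem_range.mpr (Nat.lt_succ_of_le (by
        simpa [sim] using (Finset.card_filter_le Finset.univ _ :
          (sim e e').card ≤ Finset.univ.card))))]
    refine Finset.sum_congr rfl fun ℓ _ => ?_
    rw [Finset.filter_filter]
    have : ∀ e' ∈ Finset.univ.filter
        (fun e' : X → Bool => M e' = true ∧ (sim e e').card = ℓ),
        (sim e e').card.choose k = Nat.choose ℓ k := by
      intro e' he'
      rw [(Finset.mem_filter.mp he').2.2]
    rw [Finset.sum_congr rfl this, Finset.sum_const, smul_eq_mul, mul_comm]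
    rfl
  -- Step 4: restrict range sum to Icc
  rw [h3]
  symm
  refine Finset.sum_subset (fun ℓ hℓ => ?_) (fun ℓ hℓ hℓ' => ?_)
  · rw [Finset.mem_Icc] at hℓ
    exact Finset.mem_range.mpr (Nat.lt_succ_of_le hℓ.2)
  · rw [Finset.mem_range] at hℓ
    rw [Finset.mem_Icc, not_and_or] at hℓ'
    have hlt : ℓ < k := by
      rcases hℓ' with h | h
      · omega
      · omega
    rw [Nat.choose_eq_zero_of_lt hlt, zero_mul]
end

section
/- Let M₁ be a Boolean classifier over X₁ and M₂ over X₂ with X₁ ∩ X₂ = ∅, and let M over X₁ ∪ X₂ be their conjunction: M(e) = M₁(e|X₁) · M₂(e|X₂). Then for any entity e over X₁ ∪ X₂ and any k, #sat(M,e,k) = Σ_{i+j=k, 0≤i≤|X₁|, 0≤j≤|X₂|} #sat(M₁, e|X₁, i) · #sat(M₂, e|X₂, j). -/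
open Finset

variable {X : Type*} [Fintype X] [DecidableEq X]

lemma sim_card_le (e e' : X → Bool) : (sim e e').card ≤ Fintype.card X :=
  Finset.card_filter_le _ _

lemma sim_card_sum {X₁ X₂ : Type*} [Fintype X₁] [DecidableEq X₁]
    [Fintype X₂] [DecidableEq X₂] (e e' : X₁ ⊕ X₂ → Bool) :
    (sim e e').card =
      (sim (fun a => e (Sum.inl a)) (fun a => e' (Sum.inl a))).card +
      (sim (fun b => e (Sum.inr b)) (fun b => e' (Sum.inr b))).card := by
  rw [sim, sim, sim, Finset.card_filter, Finset.card_filter, Finset.card_filter,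
    Fintype.sum_sum_type]

theorem ssatk_and_convolution {X₁ X₂ : Type*} [Fintype X₁] [DecidableEq X₁]
    [Fintype X₂] [DecidableEq X₂]
    (M₁ : (X₁ → Bool) → Bool) (M₂ : (X₂ → Bool) → Bool)
    (M : (X₁ ⊕ X₂ → Bool) → Bool)
    (hM : ∀ e : X₁ ⊕ X₂ → Bool,
      M e = (M₁ (fun a => e (Sum.inl a)) && M₂ (fun b => e (Sum.inr b))))
    (e : X₁ ⊕ X₂ → Bool) (k : ℕ) :
    ssatk M e k =
      ∑ ij ∈ (Finset.HasAntidiagonal.antidiagonal k).filter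
          (fun ij => ij.1 ≤ Fintype.card X₁ ∧ ij.2 ≤ Fintype.card X₂),
        ssatk M₁ (fun a => e (Sum.inl a)) ij.1 *
          ssatk M₂ (fun b => e (Sum.inr b)) ij.2 := by
  classical
  set e₁ := fun a => e (Sum.inl a) with he₁
  set e₂ := fun b => e (Sum.inr b) with he₂
  have hfull : ssatk M e k =
      ∑ ij ∈ Finset.HasAntidiagonal.antidiagonal k,
        ssatk M₁ e₁ ij.1 * ssatk M₂ e₂ ij.2 := by
    rw [ssatk]
    rw [Finset.card_eq_sum_card_fiberwise
      (f := fun e' : X₁ ⊕ X₂ → Bool =>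
        ((sim e₁ fun a => e' (Sum.inl a)).card, (sim e₂ fun b => e' (Sum.inr b)).card))
      (t := Finset.HasAntidiagonal.antidiagonal k)
      (by
        intro e' he'
        simp only [Finset.mem_coe, Finset.mem_filter] at he'
        simp only [Finset.mem_coe, Finset.HasAntidiagonal.mem_antidiagonal]
        rw [← sim_card_sum]
        exact he'.2.2)]
    refine Finset.sum_congr rfl ?_
    rintro ⟨i, j⟩ hij
    simp only [Finset.HasAntidiagonal.mem_antidiagonal] at hij
    rw [ssatk, ssatk, ← Finset.card_product]
    refine Finset.card_bij'
      (fun e' _ => ((fun a => e' (Sum.inl a)), (fun b => e' (Sum.inr b))))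
      (fun p _ => Sum.elim p.1 p.2) ?_ ?_ ?_ ?_
    · rintro e' he'
      simp only [Finset.mem_filter, Finset.mem_univ, true_and, Prod.mk.injEq] at he'
      obtain ⟨⟨hMe, hk⟩, hi, hj⟩ := he'
      rw [hM] at hMe
      simp only [Bool.and_eq_true] at hMe
      simp only [Finset.mem_product, Finset.mem_filter, Finset.mem_univ, true_and]
      exact ⟨⟨hMe.1, hi⟩, hMe.2, hj⟩
    · rintro ⟨f, g⟩ hp
      simp only [Finset.mem_product, Finset.mem_filter, Finset.mem_univ, true_and] at hp
      simp only [Finset.mem_filter, Finset.mem_univ, true_and, Prod.mk.injEq]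
      refine ⟨⟨?_, ?_⟩, ?_, ?_⟩
      · rw [hM]; simp only [Sum.elim_inl, Sum.elim_inr]
        show (M₁ f && M₂ g) = true
        simp [hp.1.1, hp.2.1]
      · rw [sim_card_sum]
        simp only [Sum.elim_inl, Sum.elim_inr]
        show (sim e₁ f).card + (sim e₂ g).card = k
        rw [hp.1.2, hp.2.2]; exact hij
      · exact hp.1.2
      · exact hp.2.2
    · intro e' _; funext x; cases x <;> rfl
    · rintro ⟨f, g⟩ _; rfl
  rw [hfull]
  symm
  refine Finset.sum_subset (Finset.filter_subset _ _) ?_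
  intro ij hmem hij
  rw [Finset.mem_filter, not_and] at hij
  rcases not_and_or.mp (hij hmem) with h | h
  · have h0 : ssatk M₁ e₁ ij.1 = 0 := by
      rw [ssatk, Finset.card_eq_zero, Finset.filter_eq_empty_iff]
      intro e' _
      rintro ⟨-, hc⟩
      exact h (hc ▸ sim_card_le e₁ e')
    rw [h0, Nat.zero_mul]
  · have h0 : ssatk M₂ e₂ ij.2 = 0 := by
      rw [ssatk, Finset.card_eq_zero, Finset.filter_eq_empty_iff]
      intro e' _
      rintro ⟨-, hc⟩
      exact h (hc ▸ sim_card_le e₂ e')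
    rw [h0, Nat.mul_zero]
end
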